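/- Let A ∈ ℝ^{m×n}, let Θ ∈ ℝ^{n×n} be diagonal with strictly positive diagonal entries, and let R_d ∈ ℝ^{m×m} be symmetric positive definite. Then every strictly positive eigenvalue μ of the symmetric matrix M = [[−Θ^{-1}, Aᵀ],[A, R_d]] satisfies μ² − λ_max(R_d) μ − σ_max(A)² ≤ 0, and hence μ ≤ (1/2) ( λ_max(R_d) + [ λ_max(R_d)² + 4 σ_max(A)² ]^{1/2} ). In particular, if λ_max(R_d) ≤ 2δ_d for some δ_d > 0, then the largest eigenvalue μ_m of M satisfies μ_m ≤ (1/2) ( 2δ_d + [ 4δ_d² + 4σ_max(A)² ]^{1/2} ). -/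

import Mathlib

open Matrix

/-- Spectral norm (largest singular value) of a real matrix. -/
noncomputable def specNorm {m n : ℕ} (A : Matrix (Fin m) (Fin n) ℝ) : ℝ :=
  Real.sqrt (⨆ i, (Matrix.isHermitian_mul_conjTranspose_self A).eigenvalues i)

lemma quad_le_iSup {k : ℕ} {B : Matrix (Fin k) (Fin k) ℝ} (hB : B.IsHermitian)
    (v : Fin k → ℝ) : v ⬝ᵥ B *ᵥ v ≤ (⨆ i, hB.eigenvalues i) * (v ⬝ᵥ v) := by
  set s := ⨆ i, hB.eigenvalues i with hs
  have hle : ∀ i, hB.eigenvalues i ≤ s := fun i =>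
    le_ciSup (Set.finite_range _).bddAbove i
  set U : Matrix (Fin k) (Fin k) ℝ := (hB.eigenvectorUnitary : Matrix (Fin k) (Fin k) ℝ) with hU
  set y := (star U) *ᵥ v with hy
  have h1 : v ⬝ᵥ B *ᵥ v = y ⬝ᵥ (diagonal (RCLike.ofReal ∘ hB.eigenvalues)) *ᵥ y := by
    conv_lhs => rw [hB.spectral_theorem, Unitary.conjStarAlgAut_apply]
    rw [← mulVec_mulVec, ← mulVec_mulVec, dotProduct_mulVec v, ← hU]
    congr 1
    rw [hy, star_eq_conjTranspose, conjTranspose_eq_transpose_of_trivial, mulVec_transpose]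
  have h2 : y ⬝ᵥ y = v ⬝ᵥ v := by
    rw [hy, dotProduct_mulVec, ← mulVec_transpose]
    rw [star_eq_conjTranspose, ← conjTranspose_eq_transpose_of_trivial, mulVec_mulVec]
    have : U * Uᴴ = 1 := by
      rw [← star_eq_conjTranspose]
      exact (Matrix.mem_unitaryGroup_iff).mp hB.eigenvectorUnitary.2
    rw [conjTranspose_conjTranspose, this, one_mulVec]
  rw [h1, ← h2]
  simp only [mulVec_diagonal, dotProduct, Function.comp]
  have : ∀ i ∈ Finset.univ, y i * (RCLike.ofReal (hB.eigenvalues i) * y i) ≤ s * (y i * y i) := by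
    intro i _
    have : RCLike.ofReal (hB.eigenvalues i) = hB.eigenvalues i := rfl
    rw [this]
    nlinarith [hle i, sq_nonneg (y i)]
  calc ∑ i, y i * (RCLike.ofReal (hB.eigenvalues i) * y i) ≤ ∑ i, s * (y i * y i) :=
        Finset.sum_le_sum this
    _ = s * ∑ i, y i * y i := by rw [Finset.mul_sum]

open Matrix

lemma scalar_main {μ lam σ p q t : ℝ} (hμ : 0 < μ) (hσ0 : 0 ≤ σ) (hp0 : 0 ≤ p)
    (hq0 : 0 < q) (e1 : μ * p ≤ t) (e2 : μ * q ≤ t + lam * q)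
    (hCS : t ^ 2 ≤ p * (σ ^ 2 * q)) : μ ^ 2 - lam * μ - σ ^ 2 ≤ 0 := by
  rcases eq_or_lt_of_le hp0 with hp' | hppos
  · have ht0 : t = 0 := by
      have h1 : t ^ 2 ≤ 0 := by rw [← hp'] at hCS; linarith [hCS]
      have h2 := sq_nonneg t
      exact pow_eq_zero_iff two_ne_zero |>.mp (le_antisymm h1 h2)
    have hml : μ ≤ lam := by
      rw [ht0, zero_add] at e2
      exact le_of_mul_le_mul_right (by linarith) hq0
    nlinarith [sq_nonneg σ]
  · rcases le_or_gt μ lam with hml | hml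
    · nlinarith [sq_nonneg σ]
    · have htpos : 0 < t := lt_of_lt_of_le (mul_pos hμ hppos) e1
      have h1 : (μ - lam) * q ≤ t := by nlinarith
      have h2 : 0 ≤ (μ - lam) * q := mul_nonneg (by linarith) hq0.le
      have key : (μ * p) * ((μ - lam) * q) ≤ t * t :=
        mul_le_mul e1 h1 h2 htpos.le
      have hpq : 0 < p * q := mul_pos hppos hq0
      nlinarith [key, hCS]

lemma scalar_root {μ lam σ : ℝ} (hμ : 0 < μ)
    (main : μ ^ 2 - lam * μ - σ ^ 2 ≤ 0) :
    μ ≤ (1 / 2) * (lam + Real.sqrt (lam ^ 2 + 4 * σ ^ 2)) := by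
  have hsq : (2 * μ - lam) ^ 2 ≤ lam ^ 2 + 4 * σ ^ 2 := by nlinarith
  have h1 : 2 * μ - lam ≤ Real.sqrt (lam ^ 2 + 4 * σ ^ 2) := by
    calc 2 * μ - lam ≤ |2 * μ - lam| := le_abs_self _
      _ = Real.sqrt ((2 * μ - lam) ^ 2) := (Real.sqrt_sq_eq_abs _).symm
      _ ≤ Real.sqrt (lam ^ 2 + 4 * σ ^ 2) := Real.sqrt_le_sqrt hsq
  linarith

lemma scalar_root' {μ lam σ δ : ℝ} (hμ : 0 < μ) (hδ : 0 < δ) (hld : lam ≤ 2 * δ)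
    (main : μ ^ 2 - lam * μ - σ ^ 2 ≤ 0) :
    μ ≤ (1 / 2) * (2 * δ + Real.sqrt (4 * δ ^ 2 + 4 * σ ^ 2)) := by
  have hsq : (2 * μ - 2 * δ) ^ 2 ≤ 4 * δ ^ 2 + 4 * σ ^ 2 := by nlinarith
  have h1 : 2 * μ - 2 * δ ≤ Real.sqrt (4 * δ ^ 2 + 4 * σ ^ 2) := by
    calc 2 * μ - 2 * δ ≤ |2 * μ - 2 * δ| := le_abs_self _
      _ = Real.sqrt ((2 * μ - 2 * δ) ^ 2) := (Real.sqrt_sq_eq_abs _).symm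
      _ ≤ Real.sqrt (4 * δ ^ 2 + 4 * σ ^ 2) := Real.sqrt_le_sqrt hsq
  linarith

open Matrix


/-- With `Θ` diagonal positive and `R_d` symmetric positive definite, every strictly
positive eigenvalue `μ` of `M = [[−Θ⁻¹, Aᵀ],[A, R_d]]` satisfies
`μ² − λ_max(R_d) μ − σ_max(A)² ≤ 0`, hence
`μ ≤ ½(λ_max(R_d) + √(λ_max(R_d)² + 4σ_max(A)²))`; in particular, if
`λ_max(R_d) ≤ 2δ_d` for some `δ_d > 0`, then `μ ≤ ½(2δ_d + √(4δ_d² + 4σ_max(A)²))`. -/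
theorem stmt_11 {m n : ℕ} (A : Matrix (Fin m) (Fin n) ℝ)
    (d : Fin n → ℝ) (hd : ∀ j, 0 < d j)
    (Rd : Matrix (Fin m) (Fin m) ℝ) (hRd : Rd.PosDef)
    (M : Matrix (Fin n ⊕ Fin m) (Fin n ⊕ Fin m) ℝ)
    (hMdef : M = Matrix.fromBlocks (-(Matrix.diagonal d)⁻¹) Aᵀ A Rd) :
    ∀ μ : ℝ, 0 < μ →
      ∀ x : Fin n ⊕ Fin m → ℝ, x ≠ 0 → M.mulVec x = μ • x →
      (μ ^ 2 - (⨆ i, hRd.1.eigenvalues i) * μ - specNorm A ^ 2 ≤ 0) ∧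
      (μ ≤ (1 / 2) * ((⨆ i, hRd.1.eigenvalues i) +
        Real.sqrt ((⨆ i, hRd.1.eigenvalues i) ^ 2 + 4 * specNorm A ^ 2))) ∧
      (∀ δd : ℝ, 0 < δd → (⨆ i, hRd.1.eigenvalues i) ≤ 2 * δd →
        μ ≤ (1 / 2) * (2 * δd + Real.sqrt (4 * δd ^ 2 + 4 * specNorm A ^ 2))) := by
  intro μ hμ x hx hEq
  set lam := ⨆ i, hRd.1.eigenvalues i with hlam
  have hσ0 : 0 ≤ specNorm A := Real.sqrt_nonneg _
  have hσsq : specNorm A ^ 2 =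
      ⨆ i, (Matrix.isHermitian_mul_conjTranspose_self A).eigenvalues i :=
    Real.sq_sqrt (Real.iSup_nonneg fun i =>
      (Matrix.posSemidef_self_mul_conjTranspose A).eigenvalues_nonneg i)
  set u : Fin n → ℝ := x ∘ Sum.inl with hu
  set v : Fin m → ℝ := x ∘ Sum.inr with hv
  have hxe : x = Sum.elim u v := by funext i; cases i <;> rfl
  rw [hMdef, hxe, fromBlocks_mulVec] at hEq
  have hL : -(Matrix.diagonal d)⁻¹ *ᵥ u + Aᵀ *ᵥ v = μ • u := by
    funext i; exact congrFun hEq (Sum.inl i)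
  have hR : A *ᵥ u + Rd *ᵥ v = μ • v := by
    funext i; exact congrFun hEq (Sum.inr i)
  set p := u ⬝ᵥ u with hp
  set q := v ⬝ᵥ v with hq
  set t := u ⬝ᵥ (Aᵀ *ᵥ v) with ht
  have hp0 : 0 ≤ p := Finset.sum_nonneg fun i _ => mul_self_nonneg _
  have hq0 : 0 ≤ q := Finset.sum_nonneg fun i _ => mul_self_nonneg _
  -- diagonal quadratic form nonneg
  have hdinv : (Matrix.diagonal d)⁻¹ = Matrix.diagonal (fun i => (d i)⁻¹) := by
    apply Matrix.inv_eq_right_inv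
    rw [diagonal_mul_diagonal]
    convert Matrix.diagonal_one with i
    exact mul_inv_cancel₀ (hd i).ne'
  have hdiag : 0 ≤ u ⬝ᵥ ((Matrix.diagonal d)⁻¹ *ᵥ u) := by
    rw [hdinv]
    simp only [mulVec_diagonal, dotProduct]
    refine Finset.sum_nonneg fun i _ => ?_
    have h : u i * ((d i)⁻¹ * u i) = (d i)⁻¹ * (u i * u i) := by ring
    rw [h]
    exact mul_nonneg (inv_nonneg.mpr (hd i).le) (mul_self_nonneg _)
  -- first block equation dotted with u :  μ * p ≤ t
  have e1 : μ * p ≤ t := by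
    have h := congrArg (dotProduct u) hL
    rw [dotProduct_add, dotProduct_smul, smul_eq_mul, neg_mulVec, dotProduct_neg] at h
    rw [← ht, ← hp] at h
    linarith [hdiag, h.ge, h.le]
  -- second block equation dotted with v : μ * q ≤ t + lam * q
  have hvAu : v ⬝ᵥ (A *ᵥ u) = t := by
    rw [dotProduct_mulVec, ← mulVec_transpose, dotProduct_comm, ht]
  have e2 : μ * q ≤ t + lam * q := by
    have h := congrArg (dotProduct v) hR
    rw [dotProduct_add, dotProduct_smul, smul_eq_mul, hvAu, ← hq] at h
    have hb := quad_le_iSup hRd.1 v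
    rw [← hlam, ← hq] at hb
    linarith
  -- Cauchy-Schwarz + spectral bound : t^2 ≤ p * (specNorm A ^2 * q)
  have hww : (Aᵀ *ᵥ v) ⬝ᵥ (Aᵀ *ᵥ v) ≤ specNorm A ^ 2 * q := by
    have hb := quad_le_iSup (Matrix.isHermitian_mul_conjTranspose_self A) v
    rw [← hσsq, ← hq] at hb
    have h : v ⬝ᵥ (A * Aᴴ) *ᵥ v = (Aᵀ *ᵥ v) ⬝ᵥ (Aᵀ *ᵥ v) := by
      rw [← mulVec_mulVec, dotProduct_mulVec, ← mulVec_transpose, dotProduct_comm,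
        conjTranspose_eq_transpose_of_trivial]
    rwa [h] at hb
  have hCS : t ^ 2 ≤ p * (specNorm A ^ 2 * q) := by
    have h1 : t ^ 2 ≤ p * ((Aᵀ *ᵥ v) ⬝ᵥ (Aᵀ *ᵥ v)) := by
      have h := Finset.sum_mul_sq_le_sq_mul_sq Finset.univ u (Aᵀ *ᵥ v)
      simpa [ht, hp, dotProduct, sq, Finset.mul_sum, mul_comm, mul_assoc, mul_left_comm]
        using h
    refine h1.trans (mul_le_mul_of_nonneg_left hww hp0)
  -- q > 0 (else x = 0)
  have hqpos : 0 < q := by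
    rcases eq_or_lt_of_le hq0 with hq' | hq'
    · exfalso
      have hv0 : v = 0 := dotProduct_self_eq_zero.mp hq'.symm
      rw [← hq'] at hCS
      have ht0 : t = 0 := by
        have h1 : t ^ 2 ≤ 0 := by linarith [hCS, mul_zero (p * specNorm A ^ 2)]; 
        exact pow_eq_zero_iff two_ne_zero |>.mp (le_antisymm h1 (sq_nonneg t))
      have hp0' : p = 0 := by nlinarith [e1]
      have hu0 : u = 0 := dotProduct_self_eq_zero.mp hp0'
      apply hx
      rw [hxe, hu0, hv0]
      funext i; cases i <;> rfl
    · exact hq'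
  have main : μ ^ 2 - lam * μ - specNorm A ^ 2 ≤ 0 :=
    scalar_main hμ hσ0 hp0 hqpos e1 e2 hCS
  exact ⟨main, scalar_root hμ main, fun δd hδ hld => scalar_root' hμ hδ hld main⟩
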